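/- Let p be a complex polynomial of degree d ≥ 1 with all roots in the closed unit disk, and let z ∈ ℂ with |z| > 1. Then |p'(z)/p(z)| ≥ d/(|z| + 1) > 0; in particular p'(z) ≠ 0 and the Newton step satisfies |z - N_p(z)| ≤ (|z| + 1)/d. -/

import Mathlib

open Polynomial

private lemma logDeriv_multiset (t : Multiset ℂ) (z : ℂ) (ht : ∀ ξ ∈ t, z ≠ ξ) :
    ((t.map fun ξ => X - C ξ).prod).derivative.eval z
      = ((t.map fun ξ => X - C ξ).prod).eval z * (t.map fun ξ => (z - ξ)⁻¹).sum := by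
  induction t using Multiset.induction with
  | empty => simp
  | cons a s ih =>
    have hza : z ≠ a := ht a (Multiset.mem_cons_self a s)
    have hs : ∀ ξ ∈ s, z ≠ ξ := fun ξ hξ => ht ξ (Multiset.mem_cons_of_mem hξ)
    have hza' : z - a ≠ 0 := sub_ne_zero.mpr hza
    simp only [Multiset.map_cons, Multiset.prod_cons, Multiset.sum_cons, derivative_mul,
      eval_add, eval_mul, eval_sub, eval_X, eval_C, derivative_sub, derivative_X, derivative_C,
      sub_zero, eval_one, one_mul, ih hs]
    field_simp

private lemma re_term_bound (z ξ : ℂ) (hz : 1 < ‖z‖) (hξ : ‖ξ‖ ≤ 1) :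
    (1 : ℝ) / (‖z‖ + 1) ≤ ((z / (‖z‖ : ℂ)) * (z - ξ)⁻¹).re := by
  have hz0 : (0:ℝ) < ‖z‖ := by linarith
  have hne : z - ξ ≠ 0 := by
    intro h
    rw [sub_eq_zero] at h
    rw [h] at hz; linarith
  set a : ℝ := ‖z‖ with ha
  set b : ℝ := ‖ξ‖ with hb
  set s : ℝ := (z * (starRingEnd ℂ) ξ).re with hs
  have hnsq : Complex.normSq (z - ξ) = a ^ 2 - 2 * s + b ^ 2 := by
    rw [Complex.normSq_sub]
    rw [Complex.normSq_eq_norm_sq, Complex.normSq_eq_norm_sq, ha, hb]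
    ring
  have hnsq_pos : 0 < Complex.normSq (z - ξ) := Complex.normSq_pos.mpr hne
  have hsabs : |s| ≤ a * b := by
    calc |s| ≤ ‖z * (starRingEnd ℂ) ξ‖ := Complex.abs_re_le_norm _
    _ = a * b := by rw [norm_mul, Complex.norm_conj]
  have hkey : (z / (‖z‖ : ℂ)) * (z - ξ)⁻¹
      = (z * (starRingEnd ℂ) (z - ξ)) * ((a * Complex.normSq (z - ξ) : ℝ)⁻¹ : ℂ) := by
    rw [Complex.inv_def]
    push_cast
    field_simp
    rw [ha]; ring
  rw [hkey]
  have hre : ((z * (starRingEnd ℂ) (z - ξ)) * ((a * Complex.normSq (z - ξ) : ℝ)⁻¹ : ℂ)).re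
      = (z * (starRingEnd ℂ) (z - ξ)).re * (a * Complex.normSq (z - ξ))⁻¹ := by
    simp [Complex.mul_re]
  rw [hre]
  have hre2 : (z * (starRingEnd ℂ) (z - ξ)).re = a ^ 2 - s := by
    rw [map_sub, mul_sub, Complex.sub_re, Complex.mul_conj]
    simp [hs, Complex.normSq_eq_norm_sq, ha, sq]
  rw [hre2, ← div_eq_mul_inv, hnsq]
  rw [div_le_div_iff₀ (by linarith) (by nlinarith [hnsq_pos, hnsq])]
  have hb0 : 0 ≤ b := norm_nonneg _
  have hsl : -(a*b) ≤ s := neg_le_of_abs_le hsabs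
  nlinarith [mul_nonneg (mul_nonneg hz0.le (by linarith : (0:ℝ) ≤ 1 - b)) (by linarith : (0:ℝ) ≤ a + b)]

theorem newton_step_bound_outside_disk
    (p : Polynomial ℂ) (d : ℕ) (z : ℂ)
    (hd : p.natDegree = d) (hd1 : 1 ≤ d)
    (hroots : ∀ ξ ∈ p.roots, ‖ξ‖ ≤ 1)
    (hz : 1 < ‖z‖)
    (N : ℂ → ℂ) (hN : N = fun w => w - p.eval w / p.derivative.eval w) :
    (d : ℝ) / (‖z‖ + 1) ≤ ‖p.derivative.eval z / p.eval z‖ ∧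
    p.derivative.eval z ≠ 0 ∧
    ‖z - N z‖ ≤ (‖z‖ + 1) / d := by
  have hp0 : p ≠ 0 := by
    intro h
    rw [h, natDegree_zero] at hd
    omega
  have hsplit : Splits p := IsAlgClosed.splits p
  have hcard : p.roots.card = d := by
    rw [← hd]
    exact (splits_iff_card_roots.mp hsplit)
  have hzr : ∀ ξ ∈ p.roots, z ≠ ξ := by
    intro ξ hξ heq
    have := hroots ξ hξ
    rw [heq] at hz
    linarith
  have hpz : p.eval z ≠ 0 := by
    intro h
    exact hzr z ((mem_roots hp0).mpr h) rfl
  -- the log-derivative identity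
  have hfac := hsplit.eq_prod_roots
  set q : Polynomial ℂ := (p.roots.map fun ξ => X - C ξ).prod with hq
  have hlc : p.leadingCoeff ≠ 0 := leadingCoeff_ne_zero.mpr hp0
  have hpq : p = C p.leadingCoeff * q := hfac
  have hqz : q.eval z ≠ 0 := by
    intro h
    apply hpz
    rw [hpq]
    simp [h]
  set S : ℂ := (p.roots.map fun ξ => (z - ξ)⁻¹).sum with hS
  have hratio : p.derivative.eval z / p.eval z = S := by
    have hld := logDeriv_multiset p.roots z hzr
    rw [hpq, derivative_C_mul]
    rw [eval_mul, eval_C, eval_mul, eval_C, ← hq] at *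
    rw [hld, hS]
    field_simp
  -- lower bound via real parts
  set u : ℂ := z / (‖z‖ : ℂ) with hu
  have hsum : u * S = (p.roots.map fun ξ => u * (z - ξ)⁻¹).sum := by
    rw [hS, ← Multiset.sum_map_mul_left]
  have hre_sum : (u * S).re = (p.roots.map fun ξ => (u * (z - ξ)⁻¹).re).sum := by
    rw [hsum]
    simpa [Multiset.map_map, Function.comp] using
      Complex.reAddGroupHom.map_multiset_sum (Multiset.map (fun ξ => u * (z - ξ)⁻¹) p.roots)
  have hlow : (d : ℝ) / (‖z‖ + 1) ≤ (u * S).re := by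
    rw [hre_sum]
    have hb : ∀ r ∈ (p.roots.map fun ξ => (u * (z - ξ)⁻¹).re), 1 / (‖z‖ + 1) ≤ r := by
      intro r hr
      obtain ⟨ξ, hξ, rfl⟩ := Multiset.mem_map.mp hr
      exact re_term_bound z ξ hz (hroots ξ hξ)
    have := Multiset.card_nsmul_le_sum hb
    rw [Multiset.card_map, hcard, nsmul_eq_mul] at this
    calc (d : ℝ) / (‖z‖ + 1) = d * (1 / (‖z‖ + 1)) := by ring
    _ ≤ _ := this
  have hunorm : ‖u‖ = 1 := by
    rw [hu, norm_div, Complex.norm_real, Real.norm_eq_abs,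
      abs_of_pos (by linarith : (0:ℝ) < ‖z‖), div_self (by linarith)]
  have hmain : (d : ℝ) / (‖z‖ + 1) ≤ ‖p.derivative.eval z / p.eval z‖ := by
    rw [hratio]
    calc (d : ℝ) / (‖z‖ + 1) ≤ (u * S).re := hlow
    _ ≤ ‖u * S‖ := Complex.re_le_norm _
    _ = ‖S‖ := by rw [norm_mul, hunorm, one_mul]
  have hpos : (0:ℝ) < (d : ℝ) / (‖z‖ + 1) := by
    apply div_pos
    · exact_mod_cast hd1
    · linarith
  have hderiv_ne : p.derivative.eval z ≠ 0 := by
    intro h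
    rw [h, zero_div, norm_zero] at hmain
    linarith
  refine ⟨hmain, hderiv_ne, ?_⟩
  have hNz : z - N z = p.eval z / p.derivative.eval z := by
    rw [hN]; ring
  rw [hNz]
  have hnorm_eq : ‖p.eval z / p.derivative.eval z‖ = ‖p.derivative.eval z / p.eval z‖⁻¹ := by
    rw [norm_div, norm_div, inv_div]
  rw [hnorm_eq]
  have h2 : ‖p.derivative.eval z / p.eval z‖⁻¹ ≤ ((d : ℝ) / (‖z‖ + 1))⁻¹ :=
    inv_anti₀ hpos hmain
  calc ‖p.derivative.eval z / p.eval z‖⁻¹ ≤ ((d : ℝ) / (‖z‖ + 1))⁻¹ := h2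
  _ = (‖z‖ + 1) / d := by rw [inv_div]
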